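/- For every integer u ≥ 2 and every integer n with 1 ≤ n ≤ 2u − 1, |D_{u,n}| = F_n, the n-th Fibonacci number (F₁ = F₂ = 1). -/

import Mathlib

/-- The set of the first `n` positive integers not divisible by `u`. -/
def Gset (u n : ℕ) : Finset ℕ := (Finset.Icc 1 n).image fun k => (u * k - 1) / (u - 1)

/-- The Schreier subsets of `Gset u n` containing its largest element `⌊(un-1)/(u-1)⌋`. -/
def Dset (u n : ℕ) : Finset (Finset ℕ) :=
  (Gset u n).powerset.filter fun F => (u * n - 1) / (u - 1) ∈ F ∧ ∀ x ∈ F, F.card ≤ x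

def gfun (u k : ℕ) : ℕ := (u * k - 1) / (u - 1)

lemma gfun_formula (u k : ℕ) (hu : 2 ≤ u) : gfun u k = k + (k - 1) / (u - 1) := by
  rcases Nat.eq_zero_or_pos k with hk | hk
  · subst hk; simp [gfun]
  have h2 : k ≤ u * k := Nat.le_mul_of_pos_left k (by omega)
  have key : u * k - 1 = (u - 1) * k + (k - 1) := by
    rw [Nat.sub_one_mul, Nat.sub_add_sub_cancel h2 hk]
  rw [gfun, key, Nat.mul_add_div (by omega)]
lemma gfun_strictMono (u : ℕ) (hu : 2 ≤ u) : StrictMono (gfun u) := by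
  apply strictMono_nat_of_lt_succ
  intro k
  rw [gfun_formula u k hu, gfun_formula u (k+1) hu]
  have : (k - 1) / (u - 1) ≤ (k + 1 - 1) / (u - 1) :=
    Nat.div_le_div_right (by omega)
  omega
lemma le_gfun (u k : ℕ) (hu : 2 ≤ u) : k ≤ gfun u k := by
  rw [gfun_formula u k hu]; exact Nat.le_add_right _ _
lemma gfun_eq_self (u k : ℕ) (hu : 2 ≤ u) (hk : k ≤ u - 1) : gfun u k = k := by
  rw [gfun_formula u k hu, Nat.div_eq_of_lt (by omega), Nat.add_zero]

def Aset (n : ℕ) : Finset (Finset ℕ) :=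
  (Finset.Icc 1 n).powerset.filter fun S => n ∈ S ∧ ∀ x ∈ S, S.card ≤ x

lemma fiber_card (n k : ℕ) (hn : 1 ≤ n) (hk : k ∈ Finset.Icc 1 n) :
    ((Aset n).filter fun F => F.card = k).card = (n - k).choose (k - 1) := by
  simp only [Finset.mem_Icc] at hk
  have hIcc : n - k = (Finset.Icc k (n-1)).card := by rw [Nat.card_Icc]; omega
  rw [hIcc, ← Finset.card_powersetCard (k-1) (Finset.Icc k (n-1))]
  refine Finset.card_bij' (fun F _ => F.erase n) (fun G _ => insert n G) ?hi ?hj ?li ?ri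
  case hi =>
    intro F hF
    simp only [Aset, Finset.mem_filter, Finset.mem_powerset] at hF
    obtain ⟨⟨hsub, hmem, hschreier⟩, hcard⟩ := hF
    rw [Finset.mem_powersetCard]
    constructor
    · intro x hx
      simp only [Finset.mem_erase] at hx
      obtain ⟨hxn, hxF⟩ := hx
      have h1 := hschreier x hxF
      have h2 := hsub hxF
      simp only [Finset.mem_Icc] at h2 ⊢
      omega
    · rw [Finset.card_erase_of_mem hmem, hcard]
  case hj =>
    intro G hG
    rw [Finset.mem_powersetCard] at hG
    obtain ⟨hGsub, hGcard⟩ := hG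
    have hnG : n ∉ G := by
      intro h; have := hGsub h; simp only [Finset.mem_Icc] at this; omega
    have hcard : (insert n G).card = k := by
      rw [Finset.card_insert_of_notMem hnG, hGcard]; omega
    simp only [Aset, Finset.mem_filter, Finset.mem_powerset]
    refine ⟨⟨?_, Finset.mem_insert_self _ _, ?_⟩, hcard⟩
    · intro x hx
      rcases Finset.mem_insert.mp hx with h | h
      · simp only [Finset.mem_Icc]; omega
      · have := hGsub h; simp only [Finset.mem_Icc] at this ⊢; omega
    · intro x hx
      rw [hcard]
      rcases Finset.mem_insert.mp hx with h | h
      · omega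
      · have := hGsub h; simp only [Finset.mem_Icc] at this; omega
  case li =>
    intro F hF
    simp only [Aset, Finset.mem_filter] at hF
    exact Finset.insert_erase hF.1.2.1
  case ri =>
    intro G hG
    rw [Finset.mem_powersetCard] at hG
    have hnG : n ∉ G := by
      intro h; have := hG.1 h; simp only [Finset.mem_Icc] at this; omega
    exact Finset.erase_insert hnG

lemma card_Aset (n : ℕ) (hn : 1 ≤ n) : (Aset n).card = Nat.fib n := by
  rw [Finset.card_eq_sum_card_fiberwise (f := Finset.card) (t := Finset.Icc 1 n) ?_]
  · rw [Finset.sum_congr rfl fun k hk => fiber_card n k hn hk]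
    -- ∑ k in Icc 1 n, (n-k).choose (k-1) = fib n
    rw [← Finset.Ico_add_one_right_eq_Icc, Finset.sum_Ico_eq_sum_range]
    have h1 : ∀ j ∈ Finset.range (n + 1 - 1), (n - (1 + j)).choose (1 + j - 1)
        = (n - 1 - j).choose j := by
      intro j hj; congr 1 <;> omega
    rw [Finset.sum_congr rfl h1]
    have hrw : n = (n - 1) + 1 := by omega
    rw [hrw, Nat.fib_succ_eq_sum_choose, Finset.Nat.sum_antidiagonal_eq_sum_range_succ_mk]
    rw [show (n-1)+1+1-1 = (n-1)+1 by omega]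
    rw [← Finset.sum_range_reflect (fun j => (j).choose (n - 1 - j)) ((n-1)+1)]
    apply Finset.sum_congr rfl
    intro j hj
    simp only [Finset.mem_range] at hj
    congr 1
    omega
  · intro F hF
    simp only [Finset.mem_coe, Aset, Finset.mem_filter, Finset.mem_powerset] at hF
    obtain ⟨hsub, hmem, _⟩ := hF
    simp only [Finset.mem_coe, Finset.mem_Icc]
    constructor
    · exact Finset.card_pos.mpr ⟨n, hmem⟩
    · calc F.card ≤ (Finset.Icc 1 n).card := Finset.card_le_card hsub
        _ = n := by rw [Nat.card_Icc]; omega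

theorem card_Dset_eq_fib (u n : ℕ) (hu : 2 ≤ u) (hn1 : 1 ≤ n) (hn2 : n ≤ 2 * u - 1) :
    (Dset u n).card = Nat.fib n := by
  have ginj : Function.Injective (gfun u) := (gfun_strictMono u hu).injective
  have hGset : Gset u n = (Finset.Icc 1 n).image (gfun u) := rfl
  have hD : Dset u n = (Aset n).image (Finset.image (gfun u)) := by
    ext F
    simp only [Dset, Aset, Finset.mem_filter, Finset.mem_powerset, Finset.mem_image]
    constructor
    · rintro ⟨hsub, hmem, hsch⟩
      set S : Finset ℕ := (Finset.Icc 1 n).filter (fun k => gfun u k ∈ F) with hS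
      have himg : S.image (gfun u) = F := by
        apply Finset.Subset.antisymm
        · intro y hy
          obtain ⟨k, hk, rfl⟩ := Finset.mem_image.mp hy
          exact (Finset.mem_filter.mp hk).2
        · intro y hy
          have h2 := hsub hy
          rw [hGset] at h2
          obtain ⟨k, hk1, hk2⟩ := Finset.mem_image.mp h2
          exact Finset.mem_image.mpr ⟨k, Finset.mem_filter.mpr ⟨hk1, hk2 ▸ hy⟩, hk2⟩
      have hcard : S.card = F.card := by
        rw [← himg, Finset.card_image_of_injective _ ginj]
      have hnS : n ∈ S := by
        refine Finset.mem_filter.mpr ⟨Finset.mem_Icc.mpr ⟨hn1, le_refl n⟩, ?_⟩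
        exact hmem
      refine ⟨S, ⟨Finset.filter_subset _ _, hnS, ?_⟩, himg⟩
      intro x hx
      have hne : S.Nonempty := ⟨n, hnS⟩
      set m := S.min' hne with hm
      have hmS : m ∈ S := S.min'_mem hne
      obtain ⟨hmIcc, hgm⟩ := Finset.mem_filter.mp hmS
      rw [Finset.mem_Icc] at hmIcc
      have hc1 : S.card ≤ gfun u m := by rw [hcard]; exact hsch _ hgm
      have hc2 : S.card ≤ n - m + 1 := by
        have hsubIcc : S ⊆ Finset.Icc m n := by
          intro y hy
          exact Finset.mem_Icc.mpr ⟨S.min'_le y hy, (Finset.mem_Icc.mp (Finset.mem_filter.mp hy).1).2⟩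
        calc S.card ≤ (Finset.Icc m n).card := Finset.card_le_card hsubIcc
          _ = n - m + 1 := by rw [Nat.card_Icc]; omega
      have hkey : S.card ≤ m := by
        rcases le_or_gt m (u - 1) with h | h
        · rw [gfun_eq_self u m hu h] at hc1; exact hc1
        · omega
      exact le_trans hkey (S.min'_le x hx)
    · rintro ⟨S, ⟨hSsub, hSmem, hSsch⟩, rfl⟩
      have hcard : (S.image (gfun u)).card = S.card :=
        Finset.card_image_of_injective _ ginj
      refine ⟨?_, ?_, ?_⟩
      · rw [hGset]; exact Finset.image_subset_image hSsub
      · exact Finset.mem_image_of_mem _ hSmem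
      · intro y hy
        obtain ⟨x, hx, rfl⟩ := Finset.mem_image.mp hy
        rw [hcard]
        exact le_trans (hSsch x hx) (le_gfun u x hu)
  rw [hD, Finset.card_image_of_injective _ (Finset.image_injective ginj), card_Aset n hn1]
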